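/- For every ℓ ≥ 2 there exist no two distinct vectors x, y ∈ {0,1}^n such that the ℓ-read vectors Tr(x) and Tr(y) are confusable. -/

import Mathlib

/-- The ℓ-read vector of a binary vector `x` (as a list of Booleans): its entry at 0-based
index `i` (1-indexed `i+1`) is the Hamming weight of the window of `ℓ` consecutive
coordinates of `x` ending at 1-indexed position `i+1`, with out-of-range coordinates taken
to be `0` (`false`). -/
def readVec (ℓ : ℕ) (x : List Bool) : List ℕ :=
  (List.range (x.length + ℓ - 1)).map fun i =>
    (((List.replicate (ℓ - 1) false ++ x ++ List.replicate (ℓ - 1) false).drop i).take ℓ).count true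

/-- The alternating word of length `k` over symbols `α, β`, starting with `α`:
`αβαβ…` . -/
def altWord {σ : Type*} (α β : σ) (k : ℕ) : List σ :=
  (List.range k).map fun i => if i % 2 = 0 then α else β

/-- Two words `u, v` are confusable if `u = a c b` and `v = a c̄ b` where `|c| = |c̄| ≥ 2`
and `{c, c̄} = {αβαβ…, βαβα…}` for some distinct symbols `α ≠ β`. -/
def Confusable {σ : Type*} (u v : List σ) : Prop :=
  ∃ (a b : List σ) (α β : σ) (k : ℕ), α ≠ β ∧ 2 ≤ k ∧
    u = a ++ altWord α β k ++ b ∧ v = a ++ altWord β α k ++ b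

namespace RVNC

def pad (ℓ : ℕ) (x : List Bool) : List Bool :=
  List.replicate (ℓ - 1) false ++ x ++ List.replicate (ℓ - 1) false

/-- padded prefix weight, as an integer -/
def F (ℓ : ℕ) (x : List Bool) (i : ℕ) : ℤ :=
  (((pad ℓ x).take i).count true : ℤ)

/-- the `i`-th read value -/
def R (ℓ : ℕ) (x : List Bool) (i : ℕ) : ℕ :=
  (((pad ℓ x).drop i).take ℓ).count true

lemma F_step (ℓ : ℕ) (x : List Bool) (i : ℕ) :
    F ℓ x i ≤ F ℓ x (i + 1) ∧ F ℓ x (i + 1) ≤ F ℓ x i + 1 := by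
  unfold F
  rw [List.take_add, List.count_append]
  have h1 : (((pad ℓ x).drop i).take 1).count true ≤ 1 := by
    calc (((pad ℓ x).drop i).take 1).count true ≤ (((pad ℓ x).drop i).take 1).length :=
          List.count_le_length
      _ ≤ 1 := by rw [List.length_take]; omega
  push_cast
  omega

lemma F_zero (ℓ : ℕ) (x : List Bool) (i : ℕ) (hi : i ≤ ℓ - 1) : F ℓ x i = 0 := by
  unfold F pad
  have h0 : i - (ℓ - 1) = 0 := by omega
  rw [List.append_assoc, List.take_append, List.take_replicate,
    min_eq_left (by simpa using hi)]
  simp [h0, List.count_replicate]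

lemma R_eq (ℓ : ℕ) (x : List Bool) (i : ℕ) :
    (R ℓ x i : ℤ) = F ℓ x (i + ℓ) - F ℓ x i := by
  unfold R F
  rw [List.take_add, List.count_append]
  push_cast
  ring

lemma length_readVec (ℓ : ℕ) (x : List Bool) :
    (readVec ℓ x).length = x.length + ℓ - 1 := by
  simp [readVec]

lemma readVec_get? (ℓ : ℕ) (x : List Bool) (i : ℕ) (h : i < x.length + ℓ - 1) :
    (readVec ℓ x)[i]? = some (R ℓ x i) := by
  simp [readVec, R, pad, List.getElem?_map, List.getElem?_range, h]

lemma altWord_get? {σ : Type*} (α β : σ) (k j : ℕ) (h : j < k) :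
    (altWord α β k)[j]? = some (if j % 2 = 0 then α else β) := by
  simp [altWord, List.getElem?_map, List.getElem?_range, h]

lemma get?_middle {σ : Type*} (a w b : List σ) (j : ℕ) (hj : j < w.length) :
    (a ++ w ++ b)[a.length + j]? = w[j]? := by
  rw [List.append_assoc, List.getElem?_append_right (by omega),
    Nat.add_sub_cancel_left, List.getElem?_append_left hj]

lemma get?_left {σ : Type*} (a w b : List σ) (j : ℕ) (hj : j < a.length) :
    (a ++ w ++ b)[j]? = a[j]? := by
  rw [List.append_assoc, List.getElem?_append_left hj]

end RVNC

theorem readVec_not_confusable (ℓ n : ℕ) (hℓ : 2 ≤ ℓ) :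
    ¬ ∃ x y : List Bool, x.length = n ∧ y.length = n ∧ x ≠ y ∧
      Confusable (readVec ℓ x) (readVec ℓ y) := by
  rintro ⟨x, y, hx, hy, hne, a, b, α, β, k, hαβ, hk, hu, hv⟩
  have hlx : (readVec ℓ x).length = n + ℓ - 1 := by rw [RVNC.length_readVec, hx]
  have hlen : n + ℓ - 1 = a.length + (k + b.length) := by
    have := congrArg List.length hu
    rw [hlx] at this
    simpa [altWord] using this
  set p := a.length with hp
  have hp1 : p + 1 < n + ℓ - 1 := by omega
  -- entries agree before p
  have hagree : ∀ j, j < p → RVNC.R ℓ x j = RVNC.R ℓ y j := by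
    intro j hj
    have h1 : (readVec ℓ x)[j]? = a[j]? := by rw [hu]; exact RVNC.get?_left a _ b j hj
    have h2 : (readVec ℓ y)[j]? = a[j]? := by rw [hv]; exact RVNC.get?_left a _ b j hj
    have e1 := RVNC.readVec_get? ℓ x j (by omega)
    have e2 := RVNC.readVec_get? ℓ y j (by rw [hy, ← hx]; omega)
    rw [e1] at h1; rw [e2] at h2
    have := h1.trans h2.symm
    exact Option.some_injective _ this
  -- F y = F x below p + ℓ
  have Dzero : ∀ i, i < p + ℓ → RVNC.F ℓ y i = RVNC.F ℓ x i := by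
    intro i
    induction i using Nat.strong_induction_on with
    | _ i ih =>
      intro hi
      by_cases hiℓ : i < ℓ
      · rw [RVNC.F_zero ℓ y i (by omega), RVNC.F_zero ℓ x i (by omega)]
      · push_neg at hiℓ
        obtain ⟨j, rfl⟩ : ∃ j, i = j + ℓ := ⟨i - ℓ, by omega⟩
        have hj : j < p := by omega
        have ex := RVNC.R_eq ℓ x j
        have ey := RVNC.R_eq ℓ y j
        have heq : ((RVNC.R ℓ x j : ℤ)) = (RVNC.R ℓ y j : ℤ) := by
          rw [hagree j hj]
        have hIH : RVNC.F ℓ y j = RVNC.F ℓ x j := ih j (by omega) (by omega)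
        rw [ex, ey] at heq
        omega
  -- block entries at p and p+1
  have hblock : ∀ j, j < k → RVNC.R ℓ x (p + j) = (if j % 2 = 0 then α else β) ∧
      RVNC.R ℓ y (p + j) = (if j % 2 = 0 then β else α) := by
    intro j hj
    have hjlt : p + j < n + ℓ - 1 := by omega
    have e1 := RVNC.readVec_get? ℓ x (p + j) (by omega)
    have e2 := RVNC.readVec_get? ℓ y (p + j) (by rw [hy, ← hx]; omega)
    have h1 : (readVec ℓ x)[p + j]? = (altWord α β k)[j]? := by
      rw [hu]; exact RVNC.get?_middle a _ b j (by simpa [altWord] using hj)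
    have h2 : (readVec ℓ y)[p + j]? = (altWord β α k)[j]? := by
      rw [hv]; exact RVNC.get?_middle a _ b j (by simpa [altWord] using hj)
    rw [e1, RVNC.altWord_get? α β k j hj] at h1
    rw [e2, RVNC.altWord_get? β α k j hj] at h2
    exact ⟨Option.some_injective _ h1, Option.some_injective _ h2⟩
  have hb0 := hblock 0 (by omega)
  have hb1 := hblock 1 (by omega)
  norm_num at hb0 hb1
  -- translate to F
  have ex0 := RVNC.R_eq ℓ x p
  have ey0 := RVNC.R_eq ℓ y p
  have ex1 := RVNC.R_eq ℓ x (p + 1)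
  have ey1 := RVNC.R_eq ℓ y (p + 1)
  rw [hb0.1] at ex0; rw [hb0.2] at ey0; rw [hb1.1] at ex1; rw [hb1.2] at ey1
  have h0 : RVNC.F ℓ y p = RVNC.F ℓ x p := Dzero p (by omega)
  have h1 : RVNC.F ℓ y (p + 1) = RVNC.F ℓ x (p + 1) := Dzero (p + 1) (by omega)
  have sx := RVNC.F_step ℓ x (p + ℓ)
  have sy := RVNC.F_step ℓ y (p + ℓ)
  have hpℓ : p + 1 + ℓ = p + ℓ + 1 := by omega
  rw [hpℓ] at ex1 ey1
  have hαβ' : (α : ℤ) ≠ (β : ℤ) := by exact_mod_cast hαβ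
  omega
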